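/- Let V ∈ B_{q_0} on H^n with q_0 > Q/2, where Q = 2n+2 is the homogeneous dimension. Then for all 0 < r < R < ∞ and g ∈ H^n, r^{-(Q-2)} ∫_{B(g,r)} V(h) dh ≤ C (r/R)^{2 - Q/q_0} · R^{-(Q-2)} ∫_{B(g,R)} V(h) dh, with C independent of g, r, R. -/

import Mathlib

open MeasureTheory Real

/-- The Heisenberg group `ℍⁿ`, identified with `ℝⁿ × ℝⁿ × ℝ`
(so that `x_{n+j}` of the paper is the second factor). -/
abbrev Hn (n : ℕ) := (Fin n → ℝ) × (Fin n → ℝ) × ℝ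

namespace Heisenberg

variable {n : ℕ}

/-- Group multiplication on the Heisenberg group. -/
noncomputable def hmul (g h : Hn n) : Hn n :=
  (g.1 + h.1, g.2.1 + h.2.1,
    g.2.2 + h.2.2 + 2 * ∑ j, (g.2.1 j * h.1 j - g.1 j * h.2.1 j))

/-- Group inverse on the Heisenberg group. -/
def hinv (g : Hn n) : Hn n := (-g.1, -g.2.1, -g.2.2)

/-- The homogeneous norm `|(x,t)| = (|x|⁴ + |t|²)^{1/4}`. -/
noncomputable def hnorm (g : Hn n) : ℝ :=
  ((∑ j, g.1 j ^ 2 + ∑ j, g.2.1 j ^ 2) ^ 2 + g.2.2 ^ 2) ^ ((1 : ℝ) / 4)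

/-- Left-invariant distance `d(g,h) = |g⁻¹ h|`. -/
noncomputable def dist' (g h : Hn n) : ℝ := hnorm (hmul (hinv g) h)

/-- The ball `B(g,r)` for the left-invariant distance. -/
def ball (g : Hn n) (r : ℝ) : Set (Hn n) := {h | dist' g h < r}

/-- The homogeneous dimension `Q = 2n + 2`. -/
noncomputable def Qd (n : ℕ) : ℝ := 2 * n + 2

/-- Anisotropic dilations `δ_r(x,t) = (r x, r² t)`. -/
noncomputable def hdil (r : ℝ) (g : Hn n) : Hn n := (r • g.1, r • g.2.1, r ^ 2 * g.2.2)

/-- The function `ψ(g) = |x|²/|g|²`. -/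
noncomputable def psi (g : Hn n) : ℝ :=
  (∑ j, g.1 j ^ 2 + ∑ j, g.2.1 j ^ 2) / hnorm g ^ 2

/-- The reverse Hölder class `B_q`: `V` is nonnegative, locally `L^q`, and satisfies
`(|B|⁻¹ ∫_B V^q)^{1/q} ≤ C |B|⁻¹ ∫_B V` uniformly over all balls. -/
def RevHolder (n : ℕ) (V : Hn n → ℝ) (q : ℝ) : Prop :=
  (∀ g, 0 ≤ V g) ∧
  (∀ (g : Hn n) (r : ℝ), 0 < r → IntegrableOn (fun h => V h ^ q) (ball g r) volume) ∧
  (∀ (g : Hn n) (r : ℝ), 0 < r → IntegrableOn V (ball g r) volume) ∧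
  ∃ C > 0, ∀ (g : Hn n) (r : ℝ), 0 < r →
    (((volume (ball g r)).toReal)⁻¹ * ∫ h in ball g r, V h ^ q) ^ (1 / q) ≤
      C * (((volume (ball g r)).toReal)⁻¹ * ∫ h in ball g r, V h)

/-- The auxiliary function `ρ(g) = sup { r > 0 : r^{-(Q-2)} ∫_{B(g,r)} V ≤ 1 }`. -/
noncomputable def rho (V : Hn n → ℝ) (g : Hn n) : ℝ :=
  sSup {r : ℝ | 0 < r ∧ r ^ (-(Qd n - 2)) * ∫ h in ball g r, V h ≤ 1}

end Heisenberg

namespace Heisenberg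

variable {n : ℕ}

noncomputable instance : (volume : Measure ((Fin n → ℝ) × ℝ)).IsAddHaarMeasure :=
  Measure.prod.instIsAddHaarMeasure _ _
noncomputable instance : (volume : Measure (Hn n)).IsAddHaarMeasure :=
  Measure.prod.instIsAddHaarMeasure _ _

lemma continuous_hnorm : Continuous (hnorm (n := n)) := by
  apply Continuous.rpow_const
  · fun_prop
  · exact fun _ => Or.inr (by norm_num)

lemma continuous_dist' (g : Hn n) : Continuous (dist' g) := by
  apply continuous_hnorm.comp
  unfold hmul hinv
  fun_prop

lemma isOpen_ball (g : Hn n) (r : ℝ) : IsOpen (ball g r) :=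
  isOpen_Iio.preimage (continuous_dist' g)

lemma measurableSet_ball (g : Hn n) (r : ℝ) : MeasurableSet (ball g r) :=
  (isOpen_ball g r).measurableSet

lemma hnorm_nonneg (g : Hn n) : 0 ≤ hnorm g := Real.rpow_nonneg (by positivity) _

lemma hmul_zero (h : Hn n) : hmul (hinv 0) h = h := by
  simp [hmul, hinv, Prod.ext_iff]

lemma ball_zero_eq (r : ℝ) : ball (0 : Hn n) r = {h | hnorm h < r} := by
  ext h; simp [ball, dist', hmul_zero]

lemma ball_subset (g : Hn n) {r R : ℝ} (h : r ≤ R) : ball g r ⊆ ball g R :=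
  fun x hx => lt_of_lt_of_le hx h

lemma hnorm_zero : hnorm (0 : Hn n) = 0 := by
  simp [hnorm]

/-- A shear linear equivalence of `Hn n`. -/
noncomputable def shear (v w : Fin n → ℝ) : Hn n ≃ₗ[ℝ] Hn n where
  toFun h := (h.1, h.2.1, h.2.2 + ∑ j, (v j * h.1 j + w j * h.2.1 j))
  invFun h := (h.1, h.2.1, h.2.2 - ∑ j, (v j * h.1 j + w j * h.2.1 j))
  map_add' a b := by
    obtain ⟨a1, a2, a3⟩ := a; obtain ⟨b1, b2, b3⟩ := b
    simp only [Prod.mk_add_mk, Pi.add_apply, Prod.mk.injEq]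
    refine ⟨trivial, trivial, ?_⟩
    have hs : ∑ j, (v j * (a1 j + b1 j) + w j * (a2 j + b2 j))
        = ∑ j, (v j * a1 j + w j * a2 j) + ∑ j, (v j * b1 j + w j * b2 j) := by
      rw [← Finset.sum_add_distrib]
      exact Finset.sum_congr rfl fun j _ => by ring
    rw [hs]; ring
  map_smul' c a := by
    obtain ⟨a1, a2, a3⟩ := a
    simp only [Prod.smul_mk, Pi.smul_apply, smul_eq_mul, RingHom.id_apply, Prod.mk.injEq]
    refine ⟨trivial, trivial, ?_⟩
    have hs : ∑ j, (v j * (c * a1 j) + w j * (c * a2 j))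
        = c * ∑ j, (v j * a1 j + w j * a2 j) := by
      rw [Finset.mul_sum]
      exact Finset.sum_congr rfl fun j _ => by ring
    rw [hs]; ring
  left_inv h := by
    obtain ⟨h1, h2, h3⟩ := h
    simp only [Prod.mk.injEq]
    exact ⟨trivial, trivial, by ring⟩
  right_inv h := by
    obtain ⟨h1, h2, h3⟩ := h
    simp only [Prod.mk.injEq]
    exact ⟨trivial, trivial, by ring⟩

lemma ball_eq_preimage (g : Hn n) (r : ℝ) :
    ball g r = (shear (fun j => -2 * g.2.1 j) (fun j => 2 * g.1 j)) ⁻¹'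
      ((fun h => hinv g + h) ⁻¹' ball (0 : Hn n) r) := by
  ext h
  have key : hinv g + (shear (fun j => -2 * g.2.1 j) (fun j => 2 * g.1 j)) h
      = hmul (hinv g) h := by
    obtain ⟨g1, g2, g3⟩ := g; obtain ⟨h1, h2, h3⟩ := h
    simp only [shear, hmul, hinv, LinearEquiv.coe_mk, LinearMap.coe_mk, AddHom.coe_mk,
      Prod.mk_add_mk, Pi.neg_apply, Prod.mk.injEq]
    refine ⟨trivial, trivial, ?_⟩
    have hs : ∑ j, 2 * (-g2 j * h1 j - -g1 j * h2 j)
        = ∑ j, (-2 * g2 j * h1 j + 2 * g1 j * h2 j) :=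
      Finset.sum_congr rfl fun j _ => by ring
    rw [Finset.mul_sum, hs]; ring
  simp only [ball, Set.mem_setOf_eq, Set.mem_preimage, key, dist', hmul_zero]

lemma det_prodMap {M₁ M₂ : Type*} [AddCommGroup M₁] [Module ℝ M₁] [AddCommGroup M₂] [Module ℝ M₂]
    {ι₁ ι₂ : Type*} [Fintype ι₁] [DecidableEq ι₁] [Fintype ι₂] [DecidableEq ι₂]
    (b₁ : Module.Basis ι₁ ℝ M₁) (b₂ : Module.Basis ι₂ ℝ M₂) (f : M₁ →ₗ[ℝ] M₁) (g : M₂ →ₗ[ℝ] M₂) :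
    LinearMap.det (f.prodMap g) = f.det * g.det := by
  rw [← LinearMap.det_toMatrix (b₁.prod b₂), LinearMap.toMatrix_prodMap,
    Matrix.det_fromBlocks_zero₂₁, LinearMap.det_toMatrix, LinearMap.det_toMatrix]

/-- The dilation as a linear map. -/
noncomputable def dilMap (n : ℕ) (s : ℝ) : Hn n →ₗ[ℝ] Hn n :=
  LinearMap.prodMap (s • LinearMap.id)
    (LinearMap.prodMap (s • LinearMap.id) ((s ^ 2) • (LinearMap.id : ℝ →ₗ[ℝ] ℝ)))

lemma dilMap_apply (s : ℝ) (h : Hn n) : dilMap n s h = hdil s h := by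
  obtain ⟨h1, h2, h3⟩ := h
  simp [dilMap, hdil, smul_eq_mul]

lemma dilMap_det (s : ℝ) : LinearMap.det (dilMap n s) = s ^ (2 * n + 2) := by
  rw [dilMap, det_prodMap (Pi.basisFun ℝ (Fin n)) ((Pi.basisFun ℝ (Fin n)).prod
      (Module.Basis.singleton Unit ℝ)),
    det_prodMap (Pi.basisFun ℝ (Fin n)) (Module.Basis.singleton Unit ℝ),
    LinearMap.det_smul, LinearMap.det_smul]
  simp only [LinearMap.det_smul, LinearMap.det_id, Module.finrank_fin_fun, Module.finrank_self]
  ring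

lemma hnorm_hdil (s : ℝ) (h : Hn n) : hnorm (hdil s h) = |s| * hnorm h := by
  obtain ⟨h1, h2, h3⟩ := h
  simp only [hnorm, hdil, Pi.smul_apply, smul_eq_mul]
  have e1 : ∑ j, (s * h1 j) ^ 2 = s ^ 2 * ∑ j, h1 j ^ 2 := by
    rw [Finset.mul_sum]; exact Finset.sum_congr rfl fun j _ => by ring
  have e2 : ∑ j, (s * h2 j) ^ 2 = s ^ 2 * ∑ j, h2 j ^ 2 := by
    rw [Finset.mul_sum]; exact Finset.sum_congr rfl fun j _ => by ring
  rw [e1, e2]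
  have e3 : (s ^ 2 * ∑ j, h1 j ^ 2 + s ^ 2 * ∑ j, h2 j ^ 2) ^ 2 + (s ^ 2 * h3) ^ 2
      = |s| ^ (4 : ℕ) * (((∑ j, h1 j ^ 2 + ∑ j, h2 j ^ 2) ^ 2) + h3 ^ 2) := by
    rw [show |s| ^ (4 : ℕ) = s ^ (4 : ℕ) by rw [← abs_pow, abs_of_nonneg (by positivity)]]
    ring
  rw [e3, Real.mul_rpow (by positivity) (by positivity), ← Real.rpow_natCast |s| 4,
    ← Real.rpow_mul (abs_nonneg s)]
  norm_num

lemma ball_zero_dil {r : ℝ} (hr : 0 < r) :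
    ball (0 : Hn n) r = (dilMap n r⁻¹) ⁻¹' ball (0 : Hn n) 1 := by
  ext h
  rw [ball_zero_eq, ball_zero_eq, Set.mem_preimage, Set.mem_setOf_eq, Set.mem_setOf_eq,
    dilMap_apply, hnorm_hdil, abs_of_pos (inv_pos.2 hr)]
  rw [inv_mul_lt_iff₀ hr, mul_one]

lemma volume_ball_zero {r : ℝ} (hr : 0 < r) :
    volume (ball (0 : Hn n) r)
      = ENNReal.ofReal (r ^ (2 * n + 2)) * volume (ball (0 : Hn n) 1) := by
  rw [ball_zero_dil hr, Measure.addHaar_preimage_linearMap volume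
    (by rw [dilMap_det]; positivity) _, dilMap_det]
  congr 1
  rw [← inv_pow, inv_inv, abs_of_pos (by positivity)]

lemma volume_ball_zero_one_pos : 0 < volume (ball (0 : Hn n) 1) := by
  refine (isOpen_ball _ _).measure_pos volume ⟨0, ?_⟩
  show dist' 0 0 < 1
  rw [dist', hmul_zero, hnorm_zero]
  norm_num

lemma volume_ball_zero_one_lt_top : volume (ball (0 : Hn n) 1) < ⊤ := by
  refine lt_of_le_of_lt (measure_mono ?_) (isCompact_closedBall (0 : Hn n) 1).measure_lt_top
  intro h hh
  rw [ball_zero_eq, Set.mem_setOf_eq] at hh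
  obtain ⟨h1, h2, h3⟩ := h
  have hbase : ((∑ j, h1 j ^ 2 + ∑ j, h2 j ^ 2) ^ 2 + h3 ^ 2) < 1 := by
    by_contra hc
    push_neg at hc
    have h14 := Real.one_le_rpow hc (by norm_num : (0:ℝ) ≤ 1/4)
    simp only [hnorm] at hh
    exact absurd hh (not_lt.2 h14)
  have hA : ∑ j, h1 j ^ 2 + ∑ j, h2 j ^ 2 ≤ 1 := by
    nlinarith [sq_nonneg h3, Finset.sum_nonneg (fun j (_ : j ∈ Finset.univ) => sq_nonneg (h1 j)),
      Finset.sum_nonneg (fun j (_ : j ∈ Finset.univ) => sq_nonneg (h2 j))]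
  have h1le : ∀ j, |h1 j| ≤ 1 := by
    intro j
    have : h1 j ^ 2 ≤ 1 := by
      have hj : h1 j ^ 2 ≤ ∑ i, h1 i ^ 2 :=
        Finset.single_le_sum (fun i _ => sq_nonneg (h1 i)) (Finset.mem_univ j)
      nlinarith [Finset.sum_nonneg (fun i (_ : i ∈ Finset.univ) => sq_nonneg (h2 i))]
    nlinarith [abs_nonneg (h1 j), sq_abs (h1 j)]
  have h2le : ∀ j, |h2 j| ≤ 1 := by
    intro j
    have : h2 j ^ 2 ≤ 1 := by
      have hj : h2 j ^ 2 ≤ ∑ i, h2 i ^ 2 :=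
        Finset.single_le_sum (fun i _ => sq_nonneg (h2 i)) (Finset.mem_univ j)
      nlinarith [Finset.sum_nonneg (fun i (_ : i ∈ Finset.univ) => sq_nonneg (h1 i))]
    nlinarith [abs_nonneg (h2 j), sq_abs (h2 j)]
  have hAsq : 0 ≤ (∑ j, h1 j ^ 2 + ∑ j, h2 j ^ 2) ^ 2 := sq_nonneg _
  have h3le : |h3| ≤ 1 := by nlinarith [abs_nonneg h3, sq_abs h3]
  rw [Metric.mem_closedBall, dist_zero_right]
  refine max_le ?_ (max_le ?_ ?_)
  · rw [pi_norm_le_iff_of_nonneg zero_le_one]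
    intro j
    rw [Real.norm_eq_abs]; exact h1le j
  · rw [pi_norm_le_iff_of_nonneg zero_le_one]
    intro j
    rw [Real.norm_eq_abs]; exact h2le j
  · rw [Real.norm_eq_abs]; exact h3le

lemma exists_vol (g : Hn n) : ∃ c : ℝ, 0 < c ∧ ∀ ρ : ℝ, 0 < ρ →
    volume (ball g ρ) = ENNReal.ofReal (c * ρ ^ (Qd n)) := by
  set S := shear (fun j => -2 * g.2.1 j) (fun j => 2 * g.1 j) with hS
  set a := |LinearMap.det ((S.symm : Hn n →ₗ[ℝ] Hn n))| with haa
  have ha : 0 < a := abs_pos.2 (LinearEquiv.isUnit_det' S.symm).ne_zero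
  set κ := (volume (ball (0 : Hn n) 1)).toReal with hκκ
  have hκ : 0 < κ :=
    ENNReal.toReal_pos volume_ball_zero_one_pos.ne' volume_ball_zero_one_lt_top.ne
  have hκtop : volume (ball (0 : Hn n) 1) = ENNReal.ofReal κ := by
    rw [hκκ, ENNReal.ofReal_toReal volume_ball_zero_one_lt_top.ne]
  refine ⟨a * κ, mul_pos ha hκ, fun ρ hρ => ?_⟩
  have h1 : volume (ball g ρ) = ENNReal.ofReal a * volume (ball (0 : Hn n) ρ) := by
    rw [ball_eq_preimage g ρ, Measure.addHaar_preimage_linearEquiv volume S,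
      measure_preimage_add]
  rw [h1, volume_ball_zero hρ, hκtop, ← ENNReal.ofReal_mul (by positivity),
    ← ENNReal.ofReal_mul ha.le]
  congr 1
  have : ρ ^ (2 * n + 2) = ρ ^ (Qd n) := by
    rw [← Real.rpow_natCast ρ (2 * n + 2), Qd]
    norm_num
  rw [this]; ring

set_option maxHeartbeats 1000000 in
/-- Lemma 2: for `V ∈ B_{q₀}` with `q₀ > Q/2`,
`r^{-(Q-2)} ∫_{B(g,r)} V ≤ C (r/R)^{2-Q/q₀} R^{-(Q-2)} ∫_{B(g,R)} V` for `0 < r < R`. -/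
theorem revHolder_growth (n : ℕ) (V : Hn n → ℝ) (q₀ : ℝ)
    (hq₀ : Qd n / 2 < q₀) (hV : RevHolder n V q₀) :
    ∃ C > 0, ∀ (g : Hn n) (r R : ℝ), 0 < r → r < R →
      r ^ (-(Qd n - 2)) * ∫ h in ball g r, V h ≤
        C * (r / R) ^ (2 - Qd n / q₀) *
          (R ^ (-(Qd n - 2)) * ∫ h in ball g R, V h) := by
  obtain ⟨hV0, hVq, hV1, C, hC, hRH⟩ := hV
  have hQ2 : (2 : ℝ) ≤ Qd n := by
    rw [Qd]; have : (0:ℝ) ≤ (n:ℝ) := Nat.cast_nonneg n; linarith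
  have hq₀1 : 1 < q₀ := lt_of_le_of_lt (by linarith) hq₀
  have hq₀0 : 0 < q₀ := lt_trans one_pos hq₀1
  have conj : q₀.HolderConjugate (Real.conjExponent q₀) :=
    Real.HolderConjugate.conjExponent hq₀1
  set p' := Real.conjExponent q₀ with hp'def
  have hp'eq : 1 / p' = 1 - 1 / q₀ := by
    have h := conj.inv_add_inv_eq_inv; rw [inv_one] at h
    rw [one_div, one_div]; linarith
  refine ⟨C, hC, fun g r R hr hrR => ?_⟩
  have hR : 0 < R := hr.trans hrR
  obtain ⟨c, hc, hvol⟩ := exists_vol g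
  set μr := (volume (ball g r)).toReal with hμrdef
  set μR := (volume (ball g R)).toReal with hμRdef
  have hμr : μr = c * r ^ Qd n := by
    rw [hμrdef, hvol r hr, ENNReal.toReal_ofReal (by positivity)]
  have hμR : μR = c * R ^ Qd n := by
    rw [hμRdef, hvol R hR, ENNReal.toReal_ofReal (by positivity)]
  have hμrpos : 0 < μr := by rw [hμr]; positivity
  have hμRpos : 0 < μR := by rw [hμR]; positivity
  have hIRq : 0 ≤ ∫ h in ball g R, V h ^ q₀ :=
    setIntegral_nonneg (measurableSet_ball g R) fun x _ => Real.rpow_nonneg (hV0 x) q₀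
  have hIR : 0 ≤ ∫ h in ball g R, V h :=
    setIntegral_nonneg (measurableSet_ball g R) fun x _ => hV0 x
  -- Hölder on the small ball
  haveI : IsFiniteMeasure (volume.restrict (ball g r)) := by
    constructor
    rw [Measure.restrict_apply_univ, hvol r hr]
    exact ENNReal.ofReal_lt_top
  have hmV : AEStronglyMeasurable V (volume.restrict (ball g r)) :=
    (hV1 g r hr).aestronglyMeasurable
  have hMem : MemLp V (ENNReal.ofReal q₀) (volume.restrict (ball g r)) := by
    have h1 : MemLp (fun x => ‖V x‖ ^ (ENNReal.ofReal q₀).toReal)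
        ((ENNReal.ofReal q₀) / (ENNReal.ofReal q₀)) (volume.restrict (ball g r)) := by
      rw [ENNReal.toReal_ofReal hq₀0.le,
        ENNReal.div_self (ENNReal.ofReal_pos.2 hq₀0).ne' ENNReal.ofReal_ne_top,
        memLp_one_iff_integrable]
      have heq : (fun x => ‖V x‖ ^ q₀) = fun x => V x ^ q₀ :=
        funext fun x => by rw [Real.norm_eq_abs, abs_of_nonneg (hV0 x)]
      rw [heq]
      exact hVq g r hr
    exact (memLp_norm_rpow_iff hmV (by simp [hq₀0]) ENNReal.ofReal_ne_top).1 h1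
  have hMem1 : MemLp (fun _ : Hn n => (1 : ℝ)) (ENNReal.ofReal p')
      (volume.restrict (ball g r)) := memLp_const 1
  have hHolder := integral_mul_le_Lp_mul_Lq_of_nonneg conj
    (Filter.Eventually.of_forall hV0) (Filter.Eventually.of_forall fun _ => zero_le_one) hMem hMem1
  simp only [mul_one, Real.one_rpow] at hHolder
  rw [integral_const, measureReal_def, Measure.restrict_apply_univ, smul_eq_mul, mul_one] at hHolder
  -- hHolder : ∫ in ball g r, V ≤ (∫ in ball g r, V^q₀)^(1/q₀) * μr^(1/p')
  have hI2 : ∫ h in ball g r, V h ^ q₀ ≤ ∫ h in ball g R, V h ^ q₀ :=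
    setIntegral_mono_set (hVq g R hR)
      (Filter.Eventually.of_forall fun x => Real.rpow_nonneg (hV0 x) q₀)
      ((ball_subset g hrR.le).eventuallyLE)
  have hIrq : 0 ≤ ∫ h in ball g r, V h ^ q₀ :=
    setIntegral_nonneg (measurableSet_ball g r) fun x _ => Real.rpow_nonneg (hV0 x) q₀
  have hI2' : (∫ h in ball g r, V h ^ q₀) ^ (1/q₀) ≤ (∫ h in ball g R, V h ^ q₀) ^ (1/q₀) :=
    Real.rpow_le_rpow hIrq hI2 (by positivity)
  -- reverse Hölder on big ball
  have hRH' := hRH g R hR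
  rw [Real.mul_rpow (inv_nonneg.2 hμRpos.le) hIRq] at hRH'
  have hI3 : (∫ h in ball g R, V h ^ q₀) ^ (1/q₀) ≤
      μR ^ (1/q₀) * (C * (μR⁻¹ * ∫ h in ball g R, V h)) := by
    have hmul := mul_le_mul_of_nonneg_left hRH' (Real.rpow_nonneg hμRpos.le (1/q₀))
    calc (∫ h in ball g R, V h ^ q₀) ^ (1/q₀)
        = μR ^ (1/q₀) * (μR⁻¹ ^ (1/q₀) * (∫ h in ball g R, V h ^ q₀) ^ (1/q₀)) := by
          rw [← mul_assoc, ← Real.mul_rpow hμRpos.le (inv_nonneg.2 hμRpos.le),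
            mul_inv_cancel₀ hμRpos.ne', Real.one_rpow, one_mul]
      _ ≤ μR ^ (1/q₀) * (C * (μR⁻¹ * ∫ h in ball g R, V h)) := hmul
  -- combine
  have hμrp : 0 ≤ μr ^ (1/p') := Real.rpow_nonneg hμrpos.le _
  have hmain : ∫ h in ball g r, V h ≤
      C * ((r/R) ^ (Qd n - Qd n / q₀)) * ∫ h in ball g R, V h := by
    have step1 : ∫ h in ball g r, V h ≤
        (μR ^ (1/q₀) * (C * (μR⁻¹ * ∫ h in ball g R, V h))) * μr ^ (1/p') :=
      le_trans hHolder (mul_le_mul_of_nonneg_right (le_trans hI2' hI3) hμrp)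
    have hratio : μr ^ (1/p') * (μR ^ (1/q₀) * μR⁻¹) = (r/R) ^ (Qd n - Qd n / q₀) := by
      have e1 : μR ^ (1/q₀) * μR⁻¹ = μR ^ (1/q₀ - 1) := by
        rw [Real.rpow_sub hμRpos, Real.rpow_one]
        exact (div_eq_mul_inv _ _).symm
      have e2 : μR ^ (1/q₀ - 1) = (μR ^ (1 - 1/q₀))⁻¹ := by
        rw [show (1/q₀ - 1 : ℝ) = -(1 - 1/q₀) by ring, Real.rpow_neg hμRpos.le]
      rw [e1, e2, hp'eq, ← div_eq_mul_inv, ← Real.div_rpow hμrpos.le hμRpos.le]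
      have e3 : μr / μR = (r/R) ^ (Qd n) := by
        rw [hμr, hμR, mul_div_mul_left _ _ hc.ne', ← Real.div_rpow hr.le hR.le]
      rw [e3, ← Real.rpow_mul (div_nonneg hr.le hR.le)]
      congr 1
      ring
    calc ∫ h in ball g r, V h
        ≤ (μR ^ (1/q₀) * (C * (μR⁻¹ * ∫ h in ball g R, V h))) * μr ^ (1/p') := step1
      _ = C * (μr ^ (1/p') * (μR ^ (1/q₀) * μR⁻¹)) * ∫ h in ball g R, V h := by ring
      _ = C * ((r/R) ^ (Qd n - Qd n / q₀)) * ∫ h in ball g R, V h := by rw [hratio]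
  -- final exponent juggling
  have key : r ^ (-(Qd n - 2)) * (r/R) ^ (Qd n - Qd n / q₀)
      = (r/R) ^ (2 - Qd n / q₀) * R ^ (-(Qd n - 2)) := by
    rw [show (Qd n - Qd n / q₀ : ℝ) = (2 - Qd n / q₀) + (Qd n - 2) by ring,
      Real.rpow_add (div_pos hr hR), Real.rpow_neg hr.le, Real.rpow_neg hR.le,
      Real.div_rpow hr.le hR.le (Qd n - 2)]
    have hr2 : (0:ℝ) < r ^ (Qd n - 2) := Real.rpow_pos_of_pos hr _
    have hR2 : (0:ℝ) < R ^ (Qd n - 2) := Real.rpow_pos_of_pos hR _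
    field_simp
  have hrn : 0 ≤ r ^ (-(Qd n - 2)) := Real.rpow_nonneg hr.le _
  have := mul_le_mul_of_nonneg_left hmain hrn
  calc r ^ (-(Qd n - 2)) * ∫ h in ball g r, V h
      ≤ r ^ (-(Qd n - 2)) * (C * ((r/R) ^ (Qd n - Qd n / q₀)) * ∫ h in ball g R, V h) := this
    _ = C * (r / R) ^ (2 - Qd n / q₀) * (R ^ (-(Qd n - 2)) * ∫ h in ball g R, V h) := by
        linear_combination (C * ∫ h in ball g R, V h) * key

end Heisenberg
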